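/- arXiv:2008.12730 — 3 statements merged into one kernel-verified Lean document; each statement's English description precedes it below -/
import Mathlib

section
/- Let $V$ be a real Hilbert space, $a$ a bounded, coercive bilinear form on $V$ with coercivity constant $m>0$, and $j:V\times V\to\mathbb{R}$ satisfying the Lipschitz-type bound $j(\eta_1,v_2)-j(\eta_1,v_1)+j(\eta_2,v_1)-j(\eta_2,v_2)\le\alpha\|\eta_1-\eta_2\|\|v_1-v_2\|$ with $\alpha<m$. For $f\in V$, let $u(f)$ denote the solution of $a(u,v-u)+j(u,v)-j(u,u)\ge\langle f,v-u\rangle$ for all $v\in V$ (assumed to exist and be unique for each $f$). Then $\|u(f_1)-u(f_2)\|\le\frac{1}{m-\alpha}\|f_1-f_2\|$ for all $f_1,f_2\in V$; i.e. the solution map is Lipschitz continuous. -/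
open RealInnerProductSpace

theorem stmt9 {V : Type*} [NormedAddCommGroup V] [InnerProductSpace ℝ V] [CompleteSpace V]
    (a : V →ₗ[ℝ] V →ₗ[ℝ] ℝ) (M m : ℝ)
    (hbound : ∀ u v : V, |a u v| ≤ M * ‖u‖ * ‖v‖)
    (hm : 0 < m) (hcoer : ∀ v : V, m * ‖v‖ ^ 2 ≤ a v v)
    (j : V → V → ℝ) (α : ℝ) (hα : 0 ≤ α) (hαm : α < m)
    (hj : ∀ η₁ η₂ v₁ v₂ : V,
      j η₁ v₂ - j η₁ v₁ + j η₂ v₁ - j η₂ v₂ ≤ α * ‖η₁ - η₂‖ * ‖v₁ - v₂‖)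
    (S : V → V)
    (hS : ∀ f : V, ∀ v : V, a (S f) (v - S f) + j (S f) v - j (S f) (S f) ≥ ⟪f, v - S f⟫)
    (hSuniq : ∀ f u : V,
      (∀ v : V, a u (v - u) + j u v - j u u ≥ ⟪f, v - u⟫) → u = S f) :
    ∀ f₁ f₂ : V, ‖S f₁ - S f₂‖ ≤ (1 / (m - α)) * ‖f₁ - f₂‖ := by
  intro f₁ f₂
  set u₁ := S f₁
  set u₂ := S f₂
  set d := u₁ - u₂ with hd
  have h1 := hS f₁ u₂
  have h2 := hS f₂ u₁
  have hjb := hj u₁ u₂ u₁ u₂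
  have hkey : m * ‖d‖ ^ 2 ≤ α * ‖d‖ ^ 2 + ‖f₁ - f₂‖ * ‖d‖ := by
    have hc := hcoer d
    have hbil : a d d = -(a u₁ (u₂ - u₁)) - a u₂ (u₁ - u₂) := by
      simp only [hd, map_sub, LinearMap.sub_apply]
      ring
    have hinn : ⟪f₁, u₂ - u₁⟫ + ⟪f₂, u₁ - u₂⟫ = -⟪f₁ - f₂, d⟫ := by
      simp only [hd, inner_sub_left, inner_sub_right]
      ring
    have hip : ⟪f₁ - f₂, d⟫ ≤ ‖f₁ - f₂‖ * ‖d‖ := real_inner_le_norm _ _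
    have hnn : ‖u₁ - u₂‖ = ‖d‖ := rfl
    nlinarith [hc, h1, h2, hjb, hip, sq_nonneg ‖d‖]
  rcases eq_or_lt_of_le (norm_nonneg d) with h0 | h0
  · rw [← h0]
    have hma : 0 < m - α := by linarith
    positivity
  · have hma : 0 < m - α := by linarith
    rw [div_mul_eq_mul_div, le_div_iff₀ hma, one_mul]
    nlinarith [hkey, h0]
end

section
/- Let $V$ be a real Hilbert space, $a$ a bounded coercive bilinear form with constant $m>0$, and $j:V\times V\to\mathbb{R}$ with the Lipschitz-type bound with constant $\alpha<m$ (as in the quasivariational setting), nonnegative: $j(\eta,v)\ge 0$. Suppose for each $n$, $(u_n,f_n)$ satisfies: $u_n$ solves the quasivariational inequality with right-hand side $\langle F_0,\cdot\rangle+\langle B f_n,\cdot\rangle$, where $B:Y\to V$ is a compact linear operator from a Hilbert space $Y$, and $f_n\rightharpoonup f$ weakly in $Y$. If $u$ solves the quasivariational inequality with right-hand side $\langle F_0,\cdot\rangle+\langle Bf,\cdot\rangle$, then $\langle Bf_n, u_n-u\rangle\to 0$ and $u_n\to u$ strongly in $V$. -/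
open RealInnerProductSpace Filter

theorem stmt15 {V Y : Type*} [NormedAddCommGroup V] [InnerProductSpace ℝ V] [CompleteSpace V]
    [NormedAddCommGroup Y] [InnerProductSpace ℝ Y] [CompleteSpace Y]
    (a : V →ₗ[ℝ] V →ₗ[ℝ] ℝ) (M m : ℝ)
    (hbound : ∀ u v : V, |a u v| ≤ M * ‖u‖ * ‖v‖)
    (hm : 0 < m) (hcoer : ∀ v : V, m * ‖v‖ ^ 2 ≤ a v v)
    (j : V → V → ℝ) (hjpos : ∀ η v : V, 0 ≤ j η v)
    (α : ℝ) (hα : 0 ≤ α) (hαm : α < m)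
    (hj : ∀ η₁ η₂ v₁ v₂ : V,
      j η₁ v₂ - j η₁ v₁ + j η₂ v₁ - j η₂ v₂ ≤ α * ‖η₁ - η₂‖ * ‖v₁ - v₂‖)
    (B : Y →L[ℝ] V) (hB : IsCompactOperator B)
    (F₀ : V) (fn : ℕ → Y) (f : Y)
    (hfweak : ∀ v : Y, Tendsto (fun n => ⟪fn n, v⟫) atTop (nhds ⟪f, v⟫))
    (un : ℕ → V)
    (hun : ∀ n, ∀ v : V,
      a (un n) (v - un n) + j (un n) v - j (un n) (un n)
        ≥ ⟪F₀ + B (fn n), v - un n⟫)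
    (u : V)
    (hu : ∀ v : V, a u (v - u) + j u v - j u u ≥ ⟪F₀ + B f, v - u⟫) :
    Tendsto (fun n => ⟪B (fn n), un n - u⟫) atTop (nhds 0) ∧
      Tendsto un atTop (nhds u) := by
  -- Step 1: boundedness of (fn) via Banach–Steinhaus
  obtain ⟨R, hR⟩ : ∃ R, ∀ n, ‖fn n‖ ≤ R := by
    have hpt : ∀ x : Y, ∃ C, ∀ n, ‖innerSL ℝ (fn n) x‖ ≤ C := by
      intro x
      have hb : BddAbove (Set.range fun n => |⟪fn n, x⟫|) :=
        ((hfweak x).abs).bddAbove_range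
      obtain ⟨C, hC⟩ := hb
      exact ⟨C, fun n => by
        simpa [Real.norm_eq_abs] using hC (Set.mem_range_self (f := fun n => |⟪fn n, x⟫|) n)⟩
    obtain ⟨C, hC⟩ := banach_steinhaus hpt
    exact ⟨C, fun n => by simpa [innerSL_apply_norm] using hC n⟩
  -- Step 2: weak convergence of B (fn n) to B f
  have hBweak : ∀ w : V, Tendsto (fun n => ⟪B (fn n), w⟫) atTop (nhds ⟪B f, w⟫) := by
    intro w
    have := hfweak ((ContinuousLinearMap.adjoint B) w)
    simpa only [ContinuousLinearMap.adjoint_inner_right] using this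
  -- Step 3: strong convergence of B (fn n) to B f via compactness
  have hBconv : Tendsto (fun n => B (fn n)) atTop (nhds (B f)) := by
    obtain ⟨K, hK, hBK⟩ :=
      IsCompactOperator.image_closedBall_subset_compact (f := (B : Y →ₗ[ℝ] V)) hB R
    apply tendsto_of_subseq_tendsto
    intro ns hns
    have hmem : ∀ k, B (fn (ns k)) ∈ K := fun k =>
      hBK ⟨fn (ns k), by simpa using hR (ns k), rfl⟩
    obtain ⟨y, hyK, φ, hφ, hy⟩ := hK.tendsto_subseq hmem
    have hyB : y = B f := by
      refine ext_inner_right ℝ fun w => ?_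
      have h1 : Tendsto (fun k => ⟪B (fn (ns (φ k))), w⟫) atTop (nhds ⟪y, w⟫) :=
        hy.inner tendsto_const_nhds
      have h2 : Tendsto (fun k => ⟪B (fn (ns (φ k))), w⟫) atTop (nhds ⟪B f, w⟫) :=
        (hBweak w).comp (hns.comp hφ.tendsto_atTop)
      exact tendsto_nhds_unique h1 h2
    exact ⟨φ, hyB ▸ hy⟩
  -- Step 4: the key Lipschitz estimate
  have key : ∀ n, (m - α) * ‖un n - u‖ ≤ ‖B (fn n) - B f‖ := by
    intro n
    have h1 := hun n u
    have h2 := hu (un n)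
    have hjb := hj (un n) u (un n) u
    have e1 : a (un n) (u - un n) = a (un n) u - a (un n) (un n) := map_sub _ _ _
    have e2 : a u (un n - u) = a u (un n) - a u u := map_sub _ _ _
    have e3 : a (un n - u) (un n - u) = a (un n) (un n) - a (un n) u - a u (un n) + a u u := by
      simp only [map_sub, LinearMap.sub_apply]
      ring
    have i1 : ⟪F₀ + B (fn n), u - un n⟫ = ⟪F₀, u - un n⟫ + ⟪B (fn n), u - un n⟫ :=
      inner_add_left _ _ _
    have i2 : ⟪F₀ + B f, un n - u⟫ = ⟪F₀, un n - u⟫ + ⟪B f, un n - u⟫ :=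
      inner_add_left _ _ _
    have i3 : ⟪F₀, u - un n⟫ = -⟪F₀, (un n - u : V)⟫ := by
      rw [← neg_sub]; exact inner_neg_right _ _
    have i4 : ⟪B (fn n), u - un n⟫ = -⟪B (fn n), (un n - u : V)⟫ := by
      rw [← neg_sub]; exact inner_neg_right _ _
    have hcs : ⟪B (fn n) - B f, un n - u⟫ ≤ ‖B (fn n) - B f‖ * ‖un n - u‖ :=
      real_inner_le_norm _ _
    have hsum : a (un n - u) (un n - u) ≤ α * ‖un n - u‖ * ‖un n - u‖ + ⟪B (fn n) - B f, un n - u⟫ := by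
      have hsub : ⟪B (fn n) - B f, un n - u⟫ = ⟪B (fn n), (un n - u : V)⟫ - ⟪B f, (un n - u : V)⟫ := inner_sub_left _ _ _
      rw [e3]
      rw [i1, i3, i4] at h1
      rw [i2] at h2
      rw [e1] at h1
      rw [e2] at h2
      have := hjb
      linarith
    have hq : m * ‖un n - u‖ ^ 2 ≤ a (un n - u) (un n - u) := hcoer _
    have hdn : (0:ℝ) ≤ ‖un n - u‖ := norm_nonneg _
    rcases eq_or_lt_of_le hdn with h0 | h0
    · rw [← h0]; simpa using norm_nonneg (B (fn n) - B f)
    · have : (m - α) * ‖un n - u‖ * ‖un n - u‖ ≤ ‖B (fn n) - B f‖ * ‖un n - u‖ := by nlinarith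
      exact le_of_mul_le_mul_right this h0
  -- Step 5: conclude
  have hnorm0 : Tendsto (fun n => ‖B (fn n) - B f‖) atTop (nhds 0) :=
    (tendsto_iff_norm_sub_tendsto_zero).mp hBconv
  have hunconv : Tendsto un atTop (nhds u) := by
    rw [tendsto_iff_norm_sub_tendsto_zero]
    have hma : 0 < m - α := by linarith
    refine squeeze_zero (fun n => norm_nonneg _)
      (fun n => ?_) (by simpa using hnorm0.div_const (m - α))
    rw [le_div_iff₀ hma]
    calc ‖un n - u‖ * (m - α) = (m - α) * ‖un n - u‖ := mul_comm _ _
      _ ≤ ‖B (fn n) - B f‖ := key n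
  refine ⟨?_, hunconv⟩
  have hzero : Tendsto (fun n => un n - u) atTop (nhds 0) := by
    simpa using hunconv.sub (tendsto_const_nhds (x := u))
  have := Filter.Tendsto.inner (𝕜 := ℝ) hBconv hzero
  simpa using this
end

section
/- Let $V$ be a real Hilbert space, $a$ a bounded, coercive ($a(v,v)\ge m\|v\|^2$, $m>0$), symmetric bilinear form, and for each $\eta\in V$ let $j(\eta,\cdot):V\to\mathbb{R}$ be a continuous seminorm, with the exchange bound $j(\eta_1,v_2)-j(\eta_1,v_1)+j(\eta_2,v_1)-j(\eta_2,v_2)\le\alpha\|\eta_1-\eta_2\|\|v_1-v_2\|$ and $\alpha<m$. For fixed $f\in V$ and each $\eta\in V$, let $S(\eta)$ denote the unique solution of the (linear-convex) variational inequality $a(u,v-u)+j(\eta,v)-j(\eta,u)\ge\langle f,v-u\rangle$ for all $v\in V$ (existence and uniqueness are assumed). Then $S:V\to V$ satisfies $\|S(\eta_1)-S(\eta_2)\|\le\frac{\alpha}{m}\|\eta_1-\eta_2\|$; in particular $S$ is a contraction and has a unique fixed point, which is the unique solution of the quasivariational inequality $a(u,v-u)+j(u,v)-j(u,u)\ge\langle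 f,v-u\rangle$ for all $v\in V$. -/
open RealInnerProductSpace

theorem stmt16 {V : Type*} [NormedAddCommGroup V] [InnerProductSpace ℝ V] [CompleteSpace V]
    (a : V →ₗ[ℝ] V →ₗ[ℝ] ℝ) (M m : ℝ)
    (hsymm : ∀ u v : V, a u v = a v u)
    (hbound : ∀ u v : V, |a u v| ≤ M * ‖u‖ * ‖v‖)
    (hm : 0 < m) (hcoer : ∀ v : V, m * ‖v‖ ^ 2 ≤ a v v)
    (j : V → V → ℝ)
    (hcont : ∀ η : V, Continuous (j η))
    (hjsmul : ∀ (η : V) (c : ℝ) (v : V), j η (c • v) = |c| * j η v)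
    (hjadd : ∀ η v w : V, j η (v + w) ≤ j η v + j η w)
    (α : ℝ) (hα : 0 ≤ α) (hαm : α < m)
    (hj : ∀ η₁ η₂ v₁ v₂ : V,
      j η₁ v₂ - j η₁ v₁ + j η₂ v₁ - j η₂ v₂ ≤ α * ‖η₁ - η₂‖ * ‖v₁ - v₂‖)
    (f : V) (S : V → V)
    (hS : ∀ η : V, ∀ v : V,
      a (S η) (v - S η) + j η v - j η (S η) ≥ ⟪f, v - S η⟫)
    (hSuniq : ∀ η u : V,
      (∀ v : V, a u (v - u) + j η v - j η u ≥ ⟪f, v - u⟫) → u = S η) :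
    (∀ η₁ η₂ : V, ‖S η₁ - S η₂‖ ≤ (α / m) * ‖η₁ - η₂‖) ∧
      (∃! u : V, S u = u) ∧
      (∃! u : V, ∀ v : V, a u (v - u) + j u v - j u u ≥ ⟪f, v - u⟫) ∧
      (∀ u : V, S u = u ↔ ∀ v : V, a u (v - u) + j u v - j u u ≥ ⟪f, v - u⟫) := by
  have key : ∀ η₁ η₂ : V, ‖S η₁ - S η₂‖ ≤ (α / m) * ‖η₁ - η₂‖ := by
    intro η₁ η₂
    set u₁ := S η₁ with hu₁
    set u₂ := S η₂ with hu₂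
    have h1 := hS η₁ u₂
    have h2 := hS η₂ u₁
    have hinner : (⟪f, u₂ - u₁⟫ : ℝ) + ⟪f, u₁ - u₂⟫ = 0 := by
      rw [inner_sub_right, inner_sub_right]; ring
    have hsum : 0 ≤ a u₁ (u₂ - u₁) + a u₂ (u₁ - u₂) +
        (j η₁ u₂ - j η₁ u₁ + j η₂ u₁ - j η₂ u₂) := by linarith
    have hbil : a (u₁ - u₂) (u₁ - u₂) = -(a u₁ (u₂ - u₁) + a u₂ (u₁ - u₂)) := by
      simp only [map_sub, LinearMap.sub_apply]; ring
    have hj' := hj η₁ η₂ u₁ u₂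
    have hco := hcoer (u₁ - u₂)
    have hd : 0 ≤ ‖u₁ - u₂‖ := norm_nonneg _
    have he : 0 ≤ ‖η₁ - η₂‖ := norm_nonneg _
    have hmain : m * ‖u₁ - u₂‖ ^ 2 ≤ α * ‖η₁ - η₂‖ * ‖u₁ - u₂‖ := by
      calc m * ‖u₁ - u₂‖ ^ 2 ≤ a (u₁ - u₂) (u₁ - u₂) := hco
        _ ≤ α * ‖η₁ - η₂‖ * ‖u₁ - u₂‖ := by rw [hbil]; linarith
    rcases eq_or_lt_of_le hd with h0 | h0
    · rw [← h0]; positivity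
    · have hmd : m * ‖u₁ - u₂‖ ≤ α * ‖η₁ - η₂‖ := by nlinarith
      rw [div_mul_eq_mul_div, le_div_iff₀ hm]; linarith
  have hiff : ∀ u : V, S u = u ↔ ∀ v : V, a u (v - u) + j u v - j u u ≥ ⟪f, v - u⟫ := by
    intro u
    constructor
    · intro h v
      have := hS u v
      rwa [h] at this
    · intro h
      exact (hSuniq u u h).symm
  have hK : (0 : ℝ) ≤ α / m := by positivity
  have hC : ContractingWith ⟨α / m, hK⟩ S := by
    constructor
    · apply NNReal.coe_lt_coe.mp
      push_cast
      change α / m < 1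
      rw [div_lt_one hm]
      exact hαm
    · apply LipschitzWith.of_dist_le_mul
      intro x y
      rw [dist_eq_norm, dist_eq_norm]
      exact key x y
  have hfp : ∃! u : V, S u = u := by
    refine ⟨hC.fixedPoint S, hC.fixedPoint_isFixedPt, ?_⟩
    intro y hy
    exact hC.fixedPoint_unique hy
  refine ⟨key, hfp, ?_, hiff⟩
  obtain ⟨u, hu, hu'⟩ := hfp
  exact ⟨u, (hiff u).1 hu, fun y hy => hu' y ((hiff y).2 hy)⟩
end
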